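/- If in addition c_in(q) ≠ c_out(q) for every q ∈ Ω, then at every point of Ω: ∂²t/∂u∂v = (1/(c_out − c_in))·((∂c_in/∂v)·(∂t/∂u) − (∂c_out/∂u)·(∂t/∂v)). -/

import Mathlib

/-- For a characteristic system `∂r/∂u = c_in·∂t/∂u`,
`∂r/∂v = c_out·∂t/∂v` on an open set `Ω ⊆ ℝ²` with `c_in ≠ c_out` on `Ω`, the mixed second
derivative of `t` satisfies
`∂²t/∂u∂v = (1/(c_out−c_in))·((∂c_in/∂v)·(∂t/∂u) − (∂c_out/∂u)·(∂t/∂v))`. -/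
theorem mixed_derivative_t
    (Ω : Set (ℝ × ℝ)) (hΩ : IsOpen Ω)
    (t r cin cout : ℝ × ℝ → ℝ)
    (ht : ContDiffOn ℝ 2 t Ω) (hr : ContDiffOn ℝ 2 r Ω)
    (hcin : ∀ q ∈ Ω, DifferentiableAt ℝ cin q)
    (hcout : ∀ q ∈ Ω, DifferentiableAt ℝ cout q)
    (hchar_u : ∀ q ∈ Ω, fderiv ℝ r q (1, 0) = cin q * fderiv ℝ t q (1, 0))
    (hchar_v : ∀ q ∈ Ω, fderiv ℝ r q (0, 1) = cout q * fderiv ℝ t q (0, 1))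
    (hne : ∀ q ∈ Ω, cin q ≠ cout q) :
    ∀ q ∈ Ω,
      fderiv ℝ (fun q => fderiv ℝ t q (0, 1)) q (1, 0) =
        (1 / (cout q - cin q)) *
          (fderiv ℝ cin q (0, 1) * fderiv ℝ t q (1, 0) -
            fderiv ℝ cout q (1, 0) * fderiv ℝ t q (0, 1)) := by
  intro q hq
  have hmem : Ω ∈ nhds q := hΩ.mem_nhds hq
  have htq : ContDiffAt ℝ 2 t q := ht.contDiffAt hmem
  have hrq : ContDiffAt ℝ 2 r q := hr.contDiffAt hmem
  have ht' : DifferentiableAt ℝ (fderiv ℝ t) q :=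
    (htq.fderiv_right (m := 1) (by norm_num)).differentiableAt (by norm_num)
  have hr' : DifferentiableAt ℝ (fderiv ℝ r) q :=
    (hrq.fderiv_right (m := 1) (by norm_num)).differentiableAt (by norm_num)
  -- derivative of `p ↦ fderiv f p v` in direction `w`
  have key : ∀ (f : ℝ × ℝ → ℝ), DifferentiableAt ℝ (fderiv ℝ f) q →
      ∀ v w : ℝ × ℝ, fderiv ℝ (fun p => fderiv ℝ f p v) q w = fderiv ℝ (fderiv ℝ f) q w v := by
    intro f hf v w
    rw [fderiv_clm_apply hf (differentiableAt_const v)]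
    simp
  have hTdiff : ∀ v : ℝ × ℝ, DifferentiableAt ℝ (fun p => fderiv ℝ t p v) q :=
    fun v => ht'.clm_apply (differentiableAt_const v)
  -- symmetry of second derivatives
  have hsymT : IsSymmSndFDerivAt ℝ t q := htq.isSymmSndFDerivAt (by simp [minSmoothness_of_isRCLikeNormedField])
  have hsymR : IsSymmSndFDerivAt ℝ r q := hrq.isSymmSndFDerivAt (by simp [minSmoothness_of_isRCLikeNormedField])
  -- the two sides of the characteristic equations have equal fderivs
  have hequ : fderiv ℝ (fun p => fderiv ℝ r p (1, 0)) q =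
      fderiv ℝ (fun p => cin p * fderiv ℝ t p (1, 0)) q :=
    Filter.EventuallyEq.fderiv_eq (Filter.eventuallyEq_of_mem hmem hchar_u)
  have heqv : fderiv ℝ (fun p => fderiv ℝ r p (0, 1)) q =
      fderiv ℝ (fun p => cout p * fderiv ℝ t p (0, 1)) q :=
    Filter.EventuallyEq.fderiv_eq (Filter.eventuallyEq_of_mem hmem hchar_v)
  -- product rule
  have hmul_u : fderiv ℝ (fun p => cin p * fderiv ℝ t p (1, 0)) q (0, 1) =
      fderiv ℝ cin q (0, 1) * fderiv ℝ t q (1, 0) +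
        cin q * fderiv ℝ (fun p => fderiv ℝ t p (1, 0)) q (0, 1) := by
    rw [fderiv_fun_mul (hcin q hq) (hTdiff (1, 0))]
    simp; ring
  have hmul_v : fderiv ℝ (fun p => cout p * fderiv ℝ t p (0, 1)) q (1, 0) =
      fderiv ℝ cout q (1, 0) * fderiv ℝ t q (0, 1) +
        cout q * fderiv ℝ (fun p => fderiv ℝ t p (0, 1)) q (1, 0) := by
    rw [fderiv_fun_mul (hcout q hq) (hTdiff (0, 1))]
    simp; ring
  -- equality of the mixed partials of r
  have hrmix : fderiv ℝ (fun p => fderiv ℝ r p (1, 0)) q (0, 1) =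
      fderiv ℝ (fun p => fderiv ℝ r p (0, 1)) q (1, 0) := by
    rw [key r hr' (1, 0) (0, 1), key r hr' (0, 1) (1, 0)]
    exact hsymR (0, 1) (1, 0)
  have htmix : fderiv ℝ (fun p => fderiv ℝ t p (1, 0)) q (0, 1) =
      fderiv ℝ (fun p => fderiv ℝ t p (0, 1)) q (1, 0) := by
    rw [key t ht' (1, 0) (0, 1), key t ht' (0, 1) (1, 0)]
    exact hsymT (0, 1) (1, 0)
  have main : fderiv ℝ cin q (0, 1) * fderiv ℝ t q (1, 0) +
        cin q * fderiv ℝ (fun p => fderiv ℝ t p (0, 1)) q (1, 0) =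
      fderiv ℝ cout q (1, 0) * fderiv ℝ t q (0, 1) +
        cout q * fderiv ℝ (fun p => fderiv ℝ t p (0, 1)) q (1, 0) := by
    have e := hrmix
    rw [hequ, heqv, hmul_u, hmul_v, htmix] at e
    exact e
  have hd : cout q - cin q ≠ 0 := sub_ne_zero.2 (Ne.symm (hne q hq))
  field_simp
  linarith [main]
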